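/- Let A be a C*-algebra of complex dimension at least 2, and let A' denote its continuous dual space with its usual cone of positive functionals. Then there exists no isometric positive linear map from A' into any C*-algebra: for every C*-algebra B and every ℂ-linear map T : A' → B with ‖T(φ)‖ = ‖φ‖ for all φ ∈ A', and with T(φ) ≥ 0 in B whenever φ is a positive functional, one obtains a contradiction (no such T exists). -/

import Mathlib

open Complex
open scoped ComplexStarModule

noncomputable section AuxNoPosIso

variable {E : Type*} [CStarAlgebra E]

private lemma aux_alg_nonneg [PartialOrder E] [StarOrderedRing E] {r : ℝ} (hr : 0 ≤ r) :
    0 ≤ algebraMap ℝ E r := by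
  have h0 : algebraMap ℝ E r =
      star (algebraMap ℝ E (Real.sqrt r)) * algebraMap ℝ E (Real.sqrt r) := by
    rw [← algebraMap_star_comm, star_trivial, ← map_mul, Real.mul_self_sqrt hr]
  rw [h0]
  exact star_mul_self_nonneg _

private lemma aux_alg_mono [PartialOrder E] [StarOrderedRing E] {r r' : ℝ} (h : r ≤ r') :
    algebraMap ℝ E r ≤ algebraMap ℝ E r' := by
  rw [← sub_nonneg, ← map_sub]
  exact aux_alg_nonneg (by linarith)

private lemma aux_sandwich [PartialOrder E] [StarOrderedRing E]
    {w : E} (hw : IsSelfAdjoint w) {r : ℝ} (hr : 0 ≤ r)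
    (h₁ : w ≤ algebraMap ℝ E r) (h₂ : -(algebraMap ℝ E r) ≤ w) : ‖w‖ ≤ r := by
  obtain _ | _ := subsingleton_or_nontrivial E
  · simpa [Subsingleton.elim w 0] using hr
  · rcases CStarAlgebra.norm_or_neg_norm_mem_spectrum hw with h' | h'
    · exact (le_algebraMap_iff_spectrum_le (a := w) hw).mp h₁ _ h'
    · have h₂' : algebraMap ℝ E (-r) ≤ w := by rwa [map_neg]
      have := (algebraMap_le_iff_le_spectrum (a := w) hw).mp h₂' _ h'
      linarith

private lemma aux_real_eq {z : ℂ} (hz : z.im = 0) : z = ((z.re : ℝ) : ℂ) :=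
  Complex.ext (by simp) (by simp [hz])

private lemma aux_im_zero {g : E →L[ℂ] ℂ} (hg : ‖g‖ ≤ 1)
    (hg1 : g 1 = 1) {b : E} (hb : IsSelfAdjoint b) : (g b).im = 0 := by
  obtain hE | hE := subsingleton_or_nontrivial E
  · have hb0 : b = 0 := Subsingleton.elim _ _
    simp [hb0]
  have key : ∀ n : ℝ, 2 * (g b).im * n ≤ ‖b‖ ^ 2 := by
    intro n
    have hgb : g (b + algebraMap ℂ E ((n : ℂ) * I)) = g b + (n : ℂ) * I := by
      rw [map_add]
      congr 1
      rw [Algebra.algebraMap_eq_smul_one, map_smul, hg1, smul_eq_mul, mul_one]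
    have hstar : star (b + algebraMap ℂ E ((n : ℂ) * I)) =
        b - algebraMap ℂ E ((n : ℂ) * I) := by
      rw [star_add, hb.star_eq, ← algebraMap_star_comm]
      have : star ((n : ℂ) * I) = -((n : ℂ) * I) := by
        simp [Complex.star_def, map_mul, Complex.conj_ofReal, Complex.conj_I]
      rw [this, map_neg, sub_eq_add_neg]
    have hmul : star (b + algebraMap ℂ E ((n : ℂ) * I)) * (b + algebraMap ℂ E ((n : ℂ) * I))
        = b * b + algebraMap ℂ E ((n : ℂ) ^ 2) := by
      rw [hstar, sub_mul, mul_add, mul_add, ← Algebra.commutes ((n : ℂ) * I) b, ← map_mul]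
      have : ((n : ℂ) * I) * ((n : ℂ) * I) = -((n : ℂ) ^ 2) := by
        have hI : I * I = -1 := Complex.I_mul_I
        ring_nf
        rw [Complex.I_sq]
        ring
      rw [this, map_neg]
      abel
    have h1 : ‖g (b + algebraMap ℂ E ((n : ℂ) * I))‖ ≤ ‖b + algebraMap ℂ E ((n : ℂ) * I)‖ := by
      calc ‖g (b + algebraMap ℂ E ((n : ℂ) * I))‖
          ≤ ‖g‖ * ‖b + algebraMap ℂ E ((n : ℂ) * I)‖ := g.le_opNorm _
        _ ≤ 1 * ‖b + algebraMap ℂ E ((n : ℂ) * I)‖ :=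
            mul_le_mul_of_nonneg_right hg (norm_nonneg _)
        _ = _ := one_mul _
    rw [hgb] at h1
    have h2 : ‖b + algebraMap ℂ E ((n : ℂ) * I)‖ ^ 2 = ‖b * b + algebraMap ℂ E ((n : ℂ) ^ 2)‖ := by
      rw [← hmul, CStarRing.norm_star_mul_self, sq]
    have h3 : ‖b * b + algebraMap ℂ E ((n : ℂ) ^ 2)‖ ≤ ‖b‖ ^ 2 + n ^ 2 := by
      refine (norm_add_le _ _).trans ?_
      have e1 : ‖b * b‖ ≤ ‖b‖ ^ 2 := by rw [sq]; exact norm_mul_le _ _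
      have e2 : ‖algebraMap ℂ E ((n : ℂ) ^ 2)‖ ≤ n ^ 2 := by
        rw [Algebra.algebraMap_eq_smul_one, norm_smul, norm_one, mul_one, norm_pow]
        simp [Complex.norm_real, _root_.sq_abs]
      linarith
    have h4 : ‖g b + (n : ℂ) * I‖ ^ 2 ≤ ‖b‖ ^ 2 + n ^ 2 := by
      calc ‖g b + (n : ℂ) * I‖ ^ 2 ≤ ‖b + algebraMap ℂ E ((n : ℂ) * I)‖ ^ 2 := by
            exact pow_le_pow_left₀ (norm_nonneg _) h1 2
        _ = _ := h2
        _ ≤ _ := h3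
    have h5 : ‖g b + (n : ℂ) * I‖ ^ 2 = ((g b).re) ^ 2 + ((g b).im + n) ^ 2 := by
      rw [Complex.sq_norm, Complex.normSq_apply]
      simp only [Complex.add_re, Complex.add_im, Complex.mul_re, Complex.mul_im,
        Complex.ofReal_re, Complex.ofReal_im, Complex.I_re, Complex.I_im]
      ring
    rw [h5] at h4
    nlinarith [sq_nonneg ((g b).re), sq_nonneg ((g b).im)]
  by_contra him
  have hβ : (2 : ℝ) * (g b).im ≠ 0 := by
    simp only [mul_ne_zero_iff]; exact ⟨two_ne_zero, him⟩
  have := key ((‖b‖ ^ 2 + 1) / (2 * (g b).im))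
  rw [show 2 * (g b).im * ((‖b‖ ^ 2 + 1) / (2 * (g b).im)) = ‖b‖ ^ 2 + 1 by
    field_simp] at this
  linarith

private lemma aux_pos {g : E →L[ℂ] ℂ} (hg : ‖g‖ ≤ 1) (hg1 : g 1 = 1)
    (c : E) : ∃ r : ℝ, 0 ≤ r ∧ g (star c * c) = (r : ℂ) := by
  letI := CStarAlgebra.spectralOrder E
  haveI := CStarAlgebra.spectralOrderedRing E
  set b := star c * c with hbdef
  have hb : IsSelfAdjoint b := IsSelfAdjoint.star_mul_self c
  have him : (g b).im = 0 := aux_im_zero hg hg1 hb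
  have hb0 : (0 : E) ≤ b := star_mul_self_nonneg c
  set r : ℝ := ‖b‖ with hrdef
  set b' : E := b - algebraMap ℝ E (r / 2) with hb'def
  have halg_sa : IsSelfAdjoint (algebraMap ℝ E (r / 2)) := by
    rw [IsSelfAdjoint, ← algebraMap_star_comm, star_trivial]
  have hb' : IsSelfAdjoint b' := hb.sub halg_sa
  have h₁ : b' ≤ algebraMap ℝ E (r / 2) := by
    have hbr : b ≤ algebraMap ℝ E r := hb.le_algebraMap_norm_self
    calc b' = b - algebraMap ℝ E (r / 2) := rfl
      _ ≤ algebraMap ℝ E r - algebraMap ℝ E (r / 2) := sub_le_sub_right hbr _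
      _ = algebraMap ℝ E (r / 2) := by rw [← map_sub]; congr 1; ring
  have h₂ : -(algebraMap ℝ E (r / 2)) ≤ b' := by
    have := sub_le_sub_right hb0 (algebraMap ℝ E (r / 2))
    rwa [zero_sub] at this
  have hr2 : (0 : ℝ) ≤ r / 2 := by positivity
  have hnorm : ‖b'‖ ≤ r / 2 := aux_sandwich hb' hr2 h₁ h₂
  have hgb' : ‖g b'‖ ≤ r / 2 := by
    calc ‖g b'‖ ≤ ‖g‖ * ‖b'‖ := g.le_opNorm _
      _ ≤ 1 * (r / 2) := mul_le_mul hg hnorm (norm_nonneg _) zero_le_one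
      _ = r / 2 := one_mul _
  have hgb : g b = g b' + ((r / 2 : ℝ) : ℂ) := by
    have : b = b' + algebraMap ℝ E (r / 2) := by rw [hb'def]; abel
    rw [this, map_add]
    congr 1
    rw [IsScalarTower.algebraMap_apply ℝ ℂ E, Algebra.algebraMap_eq_smul_one, map_smul, hg1,
      smul_eq_mul, mul_one]
    norm_num
  refine ⟨(g b).re, ?_, ?_⟩
  · have hre : (g b).re = (g b').re + r / 2 := by
      rw [hgb]; simp
    have : |(g b').re| ≤ r / 2 := (Complex.abs_re_le_norm _).trans hgb'
    rw [hre]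
    cases abs_le.mp this with
    | intro h _ => linarith
  · exact aux_real_eq him

private lemma aux_extreme {u v : ℂ} (huv : u + v = 2) (hu : ‖u‖ ≤ 1) (hv : ‖v‖ ≤ 1) :
    u = 1 ∧ v = 1 := by
  have hre : u.re + v.re = 2 := by
    have := congrArg Complex.re huv
    simpa using this
  have h1 : u.re ≤ 1 := (Complex.re_le_norm u).trans hu
  have h2 : v.re ≤ 1 := (Complex.re_le_norm v).trans hv
  have hure : u.re = 1 := by linarith
  have hu2 : u.re * u.re + u.im * u.im ≤ 1 := by
    have h : ‖u‖ ^ 2 ≤ 1 := by nlinarith [norm_nonneg u]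
    rwa [Complex.sq_norm, Complex.normSq_apply] at h
  have huim : u.im = 0 := by nlinarith [mul_self_nonneg u.im]
  have hueq : u = 1 := Complex.ext (by simp [hure]) (by simp [huim])
  refine ⟨hueq, ?_⟩
  have : v = 2 - u := by rw [← huv]; ring
  rw [this, hueq]
  norm_num

end AuxNoPosIso

section ExistsTwo

variable {A : Type*} [NonUnitalCStarAlgebra A]

private lemma aux_sq_scalar (a : A) (ha : IsSelfAdjoint a)
    (hG : ∀ s ∈ quasispectrum ℝ a, ∀ t ∈ quasispectrum ℝ a, s ≠ 0 → t ≠ 0 → s = t) :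
    ∃ t : ℝ, a * a = t • a := by
  by_cases h0 : ∃ t ∈ quasispectrum ℝ a, t ≠ 0
  · obtain ⟨t, ht, ht0⟩ := h0
    refine ⟨t, ?_⟩
    have hsub : ∀ r ∈ quasispectrum ℝ a, r = 0 ∨ r = t := by
      intro r hr
      rcases eq_or_ne r 0 with h | h
      · exact Or.inl h
      · exact Or.inr (hG r hr t ht h ht0)
    calc a * a = cfcₙ (fun x : ℝ => x) a * cfcₙ (fun x : ℝ => x) a := by
          rw [cfcₙ_id' ℝ a]
      _ = cfcₙ (fun x : ℝ => x * x) a := (cfcₙ_mul _ _ a).symm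
      _ = cfcₙ (fun x : ℝ => t • x) a := by
          refine cfcₙ_congr fun r hr => ?_
          rcases hsub r hr with h | h <;> simp [h, smul_eq_mul] <;> ring
      _ = t • cfcₙ (fun x : ℝ => x) a := cfcₙ_smul t (fun x : ℝ => x) a
      _ = t • a := by rw [cfcₙ_id' ℝ a]
  · push_neg at h0
    refine ⟨0, ?_⟩
    have ha0 : a = 0 := by
      conv_lhs => rw [← cfcₙ_id' ℝ a]
      have : cfcₙ (fun x : ℝ => x) a = cfcₙ (fun _ : ℝ => (0 : ℝ)) a :=
        cfcₙ_congr fun r hr => h0 r hr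
      rw [this]
      exact cfcₙ_const_zero ℝ a
    rw [ha0]
    simp

private lemma aux_sa_mul_self_norm {y : A} (hy : IsSelfAdjoint y) : ‖y * y‖ = ‖y‖ * ‖y‖ := by
  nth_rewrite 1 [← hy.star_eq]
  exact CStarRing.norm_star_mul_self (E := A) (x := y)

private lemma aux_exists_two (hdim : 2 ≤ Module.rank ℂ A) :
    ∃ a : A, IsSelfAdjoint a ∧ ∃ s ∈ quasispectrum ℝ a, ∃ t ∈ quasispectrum ℝ a,
      s ≠ t ∧ s ≠ 0 ∧ t ≠ 0 := by
  by_contra hG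
  push_neg at hG
  -- every selfadjoint element squares to a real multiple of itself
  have sq : ∀ a : A, IsSelfAdjoint a → ∃ t : ℝ, a * a = t • a := by
    intro a ha
    refine aux_sq_scalar a ha fun s hs t ht hs0 ht0 => ?_
    by_contra hst
    exact ht0 (hG a ha s hs t ht hst hs0)
  -- claim: there is a single element of which every selfadjoint element is a real multiple
  have claim : ∃ h₀ : A, ∀ x : A, IsSelfAdjoint x → ∃ r : ℝ, x = r • h₀ := by
    by_cases hall : ∀ x : A, IsSelfAdjoint x → x = 0
    · exact ⟨0, fun x hx => ⟨0, by rw [hall x hx]; simp⟩⟩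
    · push_neg at hall
      obtain ⟨h₀, hh₀sa, hh₀⟩ := hall
      refine ⟨h₀, fun x hx => ?_⟩
      rcases eq_or_ne x 0 with hx0 | hx0
      · exact ⟨0, by simp [hx0]⟩
      obtain ⟨α, hα⟩ := sq h₀ hh₀sa
      obtain ⟨β, hβ⟩ := sq x hx
      have hα0 : α ≠ 0 := by
        rintro rfl
        apply hh₀
        have : ‖h₀‖ * ‖h₀‖ = 0 := by
          rw [← aux_sa_mul_self_norm hh₀sa, hα]; simp
        rcases mul_self_eq_zero.mp this with h
        exact norm_eq_zero.mp h
      have hβ0 : β ≠ 0 := by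
        rintro rfl
        apply hx0
        have : ‖x‖ * ‖x‖ = 0 := by
          rw [← aux_sa_mul_self_norm hx, hβ]; simp
        exact norm_eq_zero.mp (mul_self_eq_zero.mp this)
      set p : A := α⁻¹ • h₀ with hpdef
      set q : A := β⁻¹ • x with hqdef
      have hpsa : IsSelfAdjoint p := (IsSelfAdjoint.all _).smul hh₀sa
      have hqsa : IsSelfAdjoint q := (IsSelfAdjoint.all _).smul hx
      have hp : p * p = p := by
        rw [hpdef, smul_mul_smul_comm, hα, smul_smul]
        congr 1
        field_simp
      have hq : q * q = q := by
        rw [hqdef, smul_mul_smul_comm, hβ, smul_smul]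
        congr 1
        field_simp
      have hp0 : p ≠ 0 := by
        rw [hpdef]
        exact smul_ne_zero (inv_ne_zero hα0) hh₀
      obtain ⟨t, e1⟩ := sq (p + q) (hpsa.add hqsa)
      obtain ⟨u, e2⟩ := sq (p - q) (hpsa.sub hqsa)
      have sum : (t + u) • p + (t - u) • q = (2 : ℝ) • p + (2 : ℝ) • q := by
        have expand : (p + q) * (p + q) + (p - q) * (p - q) = (2 : ℝ) • p + (2 : ℝ) • q := by
          rw [add_mul, mul_add, mul_add, sub_mul, mul_sub, mul_sub, hp, hq,
            two_smul ℝ p, two_smul ℝ q]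
          abel
        have lhs : (p + q) * (p + q) + (p - q) * (p - q)
            = (t + u) • p + (t - u) • q := by
          rw [e1, e2, smul_add, smul_sub, add_smul, sub_smul]
          abel
        rw [← lhs, expand]
      have hcd : (t + u - 2) • p = (2 - (t - u)) • q := by
        rw [sub_smul, sub_smul]
        rw [sub_eq_sub_iff_add_eq_add]
        rw [sum]
        abel
      rcases eq_or_ne (t + u - 2) 0 with hc | hc
      · rcases eq_or_ne (2 - (t - u)) 0 with hd | hd
        · -- t = 2, u = 0, so (p - q)^2 = 0 and p = q
          have hu0 : u = 0 := by linarith [sub_eq_zero.mp hc, sub_eq_zero.mp hd]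
          have hpq : (p - q) * (p - q) = 0 := by rw [e2, hu0]; simp
          have : p - q = 0 := by
            have hn : ‖p - q‖ * ‖p - q‖ = 0 := by
              rw [← aux_sa_mul_self_norm (hpsa.sub hqsa), hpq, norm_zero]
            exact norm_eq_zero.mp (mul_self_eq_zero.mp hn)
          have hpq' : p = q := sub_eq_zero.mp this
          refine ⟨β * α⁻¹, ?_⟩
          have : x = β • q := by rw [hqdef, smul_smul]; field_simp; rw [one_smul]
          rw [this, ← hpq', hpdef, smul_smul]
        · -- q = 0, contradiction
          exfalso
          rw [hc, zero_smul] at hcd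
          have hq0 : q = 0 := (smul_eq_zero.mp hcd.symm).resolve_left hd
          apply hx0
          have : x = β • q := by rw [hqdef, smul_smul]; field_simp; rw [one_smul]
          rw [this, hq0, smul_zero]
      · -- p is a multiple of q, hence x is a multiple of h₀... rather h₀ multiple of x etc.
        have hpq : p = ((t + u - 2)⁻¹ * (2 - (t - u))) • q := by
          rw [mul_smul, ← hcd, smul_smul]
          field_simp; rw [one_smul]
        set γ : ℝ := (t + u - 2)⁻¹ * (2 - (t - u)) with hγdef
        have hγ0 : γ ≠ 0 := by
          rintro h
          apply hp0
          rw [hpq, h, zero_smul]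
        -- h₀ = α • p = α • γ • q = (α * γ * β⁻¹) • x
        have h1 : h₀ = α • p := by
          rw [hpdef, smul_smul, mul_inv_cancel₀ hα0, one_smul]
        have hh : h₀ = (α * (γ * β⁻¹)) • x := by
          rw [h1, hpq, hqdef]
          simp only [smul_smul]
        have hx' : x = (β * γ⁻¹ * α⁻¹) • h₀ := by
          rw [hh, smul_smul,
            show β * γ⁻¹ * α⁻¹ * (α * (γ * β⁻¹)) = 1 by field_simp, one_smul]
        exact ⟨β * γ⁻¹ * α⁻¹, hx'⟩
  -- conclude rank ≤ 1
  obtain ⟨h₀, hh₀⟩ := claim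
  have hrank : Module.rank ℂ A ≤ 1 := by
    rw [rank_le_one_iff]
    refine ⟨h₀, fun v => ?_⟩
    obtain ⟨r₁, hr₁⟩ := hh₀ (ℜ v) (ℜ v).2
    obtain ⟨r₂, hr₂⟩ := hh₀ (ℑ v) (ℑ v).2
    refine ⟨(r₁ : ℂ) + I * (r₂ : ℂ), ?_⟩
    have hv : ((ℜ v : A) : A) + I • (ℑ v : A) = v := realPart_add_I_smul_imaginaryPart v
    rw [← hv, hr₁, hr₂]
    rw [add_smul, ← Complex.coe_smul r₁ h₀, mul_smul, ← Complex.coe_smul r₂ h₀]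
  have : (2 : Cardinal) ≤ 1 := hdim.trans hrank
  norm_num at this

end ExistsTwo

/-- If `A` is a C*-algebra of complex dimension at least 2, then there is no
isometric positive `ℂ`-linear map from the dual `A'` (with its usual cone of positive
functionals) into any C*-algebra `B`.  Positivity in a C*-algebra is the canonical one:
`b ≥ 0` iff `b = c* c` for some `c`. -/
theorem no_positive_isometry_from_dual_of_cstarAlgebra
    (A : Type*) [NonUnitalCStarAlgebra A] (hdim : 2 ≤ Module.rank ℂ A)
    (B : Type*) [NonUnitalCStarAlgebra B] :
    ¬ ∃ T : (A →L[ℂ] ℂ) →ₗ[ℂ] B,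
        (∀ φ : A →L[ℂ] ℂ, ‖T φ‖ = ‖φ‖) ∧
        (∀ φ : A →L[ℂ] ℂ,
          (∀ a : A, (∃ c : A, a = star c * c) → ∃ r : ℝ, 0 ≤ r ∧ φ a = (r : ℂ)) →
          ∃ c : B, T φ = star c * c) := by
  rintro ⟨T, hiso, hpos⟩
  obtain ⟨a, ha, s, hs, t, ht, hst, hs0, ht0⟩ := aux_exists_two hdim
  -- the bump function
  set ε : ℝ := min (min |s| |t|) |s - t| / 2 with hεdef
  have habs_s : 0 < |s| := abs_pos.mpr hs0
  have habs_t : 0 < |t| := abs_pos.mpr ht0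
  have habs_st : 0 < |s - t| := abs_pos.mpr (sub_ne_zero.mpr hst)
  have hmin_pos : 0 < min (min |s| |t|) |s - t| := lt_min (lt_min habs_s habs_t) habs_st
  have hε0 : 0 < ε := by rw [hεdef]; exact div_pos hmin_pos two_pos
  have hε_half : ε ≤ min (min |s| |t|) |s - t| := by
    rw [hεdef]; exact half_le_self hmin_pos.le
  have hεs : ε ≤ |s| := hε_half.trans ((min_le_left _ _).trans (min_le_left _ _))
  have hεt : ε ≤ |t| := hε_half.trans ((min_le_left _ _).trans (min_le_right _ _))
  have hεst : ε ≤ |s - t| := hε_half.trans (min_le_right _ _)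
  set f : ℝ → ℝ := fun r => max 0 (1 - |r - s| / ε) - max 0 (1 - |r - t| / ε) with hfdef
  have hmax_zero : ∀ r c : ℝ, ε ≤ |r - c| → max 0 (1 - |r - c| / ε) = 0 := by
    intro r c h
    refine max_eq_left ?_
    have : (1 : ℝ) ≤ |r - c| / ε := (one_le_div hε0).mpr h
    linarith
  have hf0 : f 0 = 0 := by
    rw [hfdef]
    simp only
    rw [hmax_zero 0 s (by rwa [zero_sub, abs_neg]), hmax_zero 0 t (by rwa [zero_sub, abs_neg]),
      sub_zero]
  have hfs : f s = 1 := by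
    rw [hfdef]
    simp only
    rw [hmax_zero s t hεst, sub_self, abs_zero, zero_div, sub_zero, sub_zero]
    exact max_eq_right zero_le_one
  have hft : f t = -1 := by
    rw [hfdef]
    simp only
    rw [hmax_zero t s (by rwa [abs_sub_comm]), sub_self, abs_zero, zero_div, sub_zero, zero_sub]
    rw [max_eq_right zero_le_one]
  have hfb : ∀ r : ℝ, ‖f r‖ ≤ 1 := by
    intro r
    rw [Real.norm_eq_abs, hfdef]
    simp only
    have h1 : (0:ℝ) ≤ max 0 (1 - |r - s| / ε) := le_max_left _ _
    have h2 : (0:ℝ) ≤ max 0 (1 - |r - t| / ε) := le_max_left _ _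
    have h3 : max 0 (1 - |r - s| / ε) ≤ 1 :=
      max_le zero_le_one (by
        have := div_nonneg (abs_nonneg (r - s)) hε0.le
        linarith)
    have h4 : max 0 (1 - |r - t| / ε) ≤ 1 :=
      max_le zero_le_one (by
        have := div_nonneg (abs_nonneg (r - t)) hε0.le
        linarith)
    rw [abs_le]
    constructor <;> linarith
  have hfc : Continuous f := by
    rw [hfdef]
    apply Continuous.sub <;> refine Continuous.max continuous_const ?_ <;>
      exact continuous_const.sub (((continuous_id.sub continuous_const).abs).div_const ε)
  -- pass to the unitization of A
  set z : A := cfcₙ f a with hzdef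
  have haE : IsSelfAdjoint (a : Unitization ℂ A) := ha.inr ℂ
  have hza : (z : Unitization ℂ A) = cfc f (a : Unitization ℂ A) :=
    Unitization.real_cfcₙ_eq_cfc_inr a f hf0
  have hsE : s ∈ spectrum ℝ (a : Unitization ℂ A) := by
    rw [← Unitization.quasispectrum_eq_spectrum_inr' ℝ ℂ a]; exact hs
  have htE : t ∈ spectrum ℝ (a : Unitization ℂ A) := by
    rw [← Unitization.quasispectrum_eq_spectrum_inr' ℝ ℂ a]; exact ht
  have hz_norm : ‖z‖ ≤ 1 := by
    rw [← Unitization.norm_inr (𝕜 := ℂ) z, hza]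
    exact norm_cfc_le zero_le_one (fun x _ => hfb x)
  -- the two functionals on the unitization
  have key : ∀ σ : ℝ, σ = 1 ∨ σ = -1 → (∀ r ∈ spectrum ℝ (a : Unitization ℂ A), f r = σ → True) →
      True := fun _ _ _ => trivial
  -- x₁ = 1 + z
  have hx₁cfc : (1 : Unitization ℂ A) + (z : Unitization ℂ A)
      = cfc (fun r : ℝ => 1 + f r) (a : Unitization ℂ A) := by
    rw [hza, cfc_const_add 1 f (a : Unitization ℂ A) hfc.continuousOn haE, map_one]
  have h2spec₁ : (2:ℝ) ∈ spectrum ℝ ((1 : Unitization ℂ A) + (z : Unitization ℂ A)) := by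
    have hmap := cfc_map_spectrum (R := ℝ) (f := fun r : ℝ => 1 + f r)
      (a := (a : Unitization ℂ A)) haE ((continuous_const.add hfc).continuousOn)
    rw [hx₁cfc, hmap]
    exact ⟨s, hsE, by show (1:ℝ) + f s = 2; rw [hfs]; norm_num⟩
  have hx₁norm : ‖(1 : Unitization ℂ A) + (z : Unitization ℂ A)‖ = 2 := by
    refine le_antisymm ?_ ?_
    · calc ‖(1 : Unitization ℂ A) + (z : Unitization ℂ A)‖
          ≤ ‖(1 : Unitization ℂ A)‖ + ‖(z : Unitization ℂ A)‖ := norm_add_le _ _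
        _ ≤ 1 + 1 := by
            rw [norm_one, Unitization.norm_inr]
            linarith [hz_norm]
        _ = 2 := by norm_num
    · have := spectrum.norm_le_norm_of_mem h2spec₁
      simpa using this
  have hx₁ne : (1 : Unitization ℂ A) + (z : Unitization ℂ A) ≠ 0 := by
    rw [← norm_ne_zero_iff, hx₁norm]; norm_num
  obtain ⟨g₁, hg₁norm, hg₁val⟩ := exists_dual_vector ℂ _ (norm_ne_zero_iff.mpr hx₁ne)
  rw [hx₁norm, map_add] at hg₁val
  have hsum₁ : g₁ 1 + g₁ (z : Unitization ℂ A) = 2 := by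
    rw [hg₁val]; norm_num
  have hb₁ : ‖g₁ (1 : Unitization ℂ A)‖ ≤ 1 := by
    have := g₁.le_opNorm (1 : Unitization ℂ A)
    rwa [hg₁norm, one_mul, norm_one] at this
  have hb₂ : ‖g₁ (z : Unitization ℂ A)‖ ≤ 1 := by
    have := g₁.le_opNorm (z : Unitization ℂ A)
    rw [hg₁norm, one_mul, Unitization.norm_inr] at this
    exact this.trans hz_norm
  obtain ⟨hg₁1, hg₁z⟩ := aux_extreme hsum₁ hb₁ hb₂
  -- x₂ = 1 - z
  have hx₂cfc : (1 : Unitization ℂ A) - (z : Unitization ℂ A)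
      = cfc (fun r : ℝ => 1 - f r) (a : Unitization ℂ A) := by
    rw [hza, cfc_sub (fun _ : ℝ => (1:ℝ)) f (a : Unitization ℂ A)
      continuous_const.continuousOn hfc.continuousOn, cfc_const 1 (a : Unitization ℂ A) haE,
      map_one]
  have h2spec₂ : (2:ℝ) ∈ spectrum ℝ ((1 : Unitization ℂ A) - (z : Unitization ℂ A)) := by
    have hmap := cfc_map_spectrum (R := ℝ) (f := fun r : ℝ => 1 - f r)
      (a := (a : Unitization ℂ A)) haE ((continuous_const.sub hfc).continuousOn)
    rw [hx₂cfc, hmap]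
    exact ⟨t, htE, by show (1:ℝ) - f t = 2; rw [hft]; norm_num⟩
  have hx₂norm : ‖(1 : Unitization ℂ A) - (z : Unitization ℂ A)‖ = 2 := by
    refine le_antisymm ?_ ?_
    · calc ‖(1 : Unitization ℂ A) - (z : Unitization ℂ A)‖
          ≤ ‖(1 : Unitization ℂ A)‖ + ‖(z : Unitization ℂ A)‖ := norm_sub_le _ _
        _ ≤ 1 + 1 := by
            rw [norm_one, Unitization.norm_inr]
            linarith [hz_norm]
        _ = 2 := by norm_num
    · have := spectrum.norm_le_norm_of_mem h2spec₂
      simpa using this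
  have hx₂ne : (1 : Unitization ℂ A) - (z : Unitization ℂ A) ≠ 0 := by
    rw [← norm_ne_zero_iff, hx₂norm]; norm_num
  obtain ⟨g₂, hg₂norm, hg₂val⟩ := exists_dual_vector ℂ _ (norm_ne_zero_iff.mpr hx₂ne)
  rw [hx₂norm, map_sub] at hg₂val
  have hsum₂ : g₂ 1 + (-(g₂ (z : Unitization ℂ A))) = 2 := by
    rw [← sub_eq_add_neg, hg₂val]; norm_num
  have hb₃ : ‖g₂ (1 : Unitization ℂ A)‖ ≤ 1 := by
    have := g₂.le_opNorm (1 : Unitization ℂ A)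
    rwa [hg₂norm, one_mul, norm_one] at this
  have hb₄ : ‖-(g₂ (z : Unitization ℂ A))‖ ≤ 1 := by
    rw [norm_neg]
    have := g₂.le_opNorm (z : Unitization ℂ A)
    rw [hg₂norm, one_mul, Unitization.norm_inr] at this
    exact this.trans hz_norm
  obtain ⟨hg₂1, hg₂z'⟩ := aux_extreme hsum₂ hb₃ hb₄
  have hg₂z : g₂ (z : Unitization ℂ A) = -1 := by
    have := congrArg Neg.neg hg₂z'
    rwa [neg_neg] at this
  -- the functionals on A
  let inrL : A →L[ℂ] Unitization ℂ A := ⟨Unitization.inrHom ℂ ℂ A, Unitization.continuous_inr⟩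
  have hinrL : ∀ x : A, inrL x = (x : Unitization ℂ A) := fun _ => rfl
  set φ : A →L[ℂ] ℂ := g₁.comp inrL with hφdef
  set ψ : A →L[ℂ] ℂ := g₂.comp inrL with hψdef
  have hφ_apply : ∀ x : A, φ x = g₁ (x : Unitization ℂ A) := fun _ => rfl
  have hψ_apply : ∀ x : A, ψ x = g₂ (x : Unitization ℂ A) := fun _ => rfl
  have hφnorm : ‖φ‖ ≤ 1 := by
    refine ContinuousLinearMap.opNorm_le_bound _ zero_le_one (fun x => ?_)
    rw [one_mul, hφ_apply]
    have := g₁.le_opNorm (x : Unitization ℂ A)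
    rwa [hg₁norm, one_mul, Unitization.norm_inr] at this
  have hψnorm : ‖ψ‖ ≤ 1 := by
    refine ContinuousLinearMap.opNorm_le_bound _ zero_le_one (fun x => ?_)
    rw [one_mul, hψ_apply]
    have := g₂.le_opNorm (x : Unitization ℂ A)
    rwa [hg₂norm, one_mul, Unitization.norm_inr] at this
  have hφpos : ∀ aa : A, (∃ c : A, aa = star c * c) → ∃ r : ℝ, 0 ≤ r ∧ φ aa = (r : ℂ) := by
    rintro aa ⟨c, rfl⟩
    have h1 : φ (star c * c) = g₁ (star (c : Unitization ℂ A) * (c : Unitization ℂ A)) := by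
      rw [hφ_apply, Unitization.inr_mul, Unitization.inr_star]
    rw [h1]
    exact aux_pos hg₁norm.le hg₁1 _
  have hψpos : ∀ aa : A, (∃ c : A, aa = star c * c) → ∃ r : ℝ, 0 ≤ r ∧ ψ aa = (r : ℂ) := by
    rintro aa ⟨c, rfl⟩
    have h1 : ψ (star c * c) = g₂ (star (c : Unitization ℂ A) * (c : Unitization ℂ A)) := by
      rw [hψ_apply, Unitization.inr_mul, Unitization.inr_star]
    rw [h1]
    exact aux_pos hg₂norm.le hg₂1 _
  -- the norm of φ - ψ is at least 2
  have hφψ : (2:ℝ) ≤ ‖φ - ψ‖ := by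
    have hval : (φ - ψ) z = 2 := by
      rw [ContinuousLinearMap.sub_apply, hφ_apply, hψ_apply, hg₁z, hg₂z]
      norm_num
    have h1 := (φ - ψ).le_opNorm z
    rw [hval] at h1
    have h2 : ‖(2:ℂ)‖ = 2 := by norm_num
    rw [h2] at h1
    calc (2:ℝ) ≤ ‖φ - ψ‖ * ‖z‖ := h1
      _ ≤ ‖φ - ψ‖ * 1 := mul_le_mul_of_nonneg_left hz_norm (norm_nonneg _)
      _ = ‖φ - ψ‖ := mul_one _
  -- now move to B and derive a contradiction
  obtain ⟨c₁, hc₁⟩ := hpos φ hφpos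
  obtain ⟨c₂, hc₂⟩ := hpos ψ hψpos
  letI := CStarAlgebra.spectralOrder (Unitization ℂ B)
  haveI := CStarAlgebra.spectralOrderedRing (Unitization ℂ B)
  set u : Unitization ℂ B := ((T φ : B) : Unitization ℂ B) with hudef
  set v : Unitization ℂ B := ((T ψ : B) : Unitization ℂ B) with hvdef
  have hu_eq : u = star (c₁ : Unitization ℂ B) * (c₁ : Unitization ℂ B) := by
    rw [hudef, hc₁, Unitization.inr_mul, Unitization.inr_star]
  have hv_eq : v = star (c₂ : Unitization ℂ B) * (c₂ : Unitization ℂ B) := by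
    rw [hvdef, hc₂, Unitization.inr_mul, Unitization.inr_star]
  have hu0 : (0 : Unitization ℂ B) ≤ u := hu_eq ▸ star_mul_self_nonneg _
  have hv0 : (0 : Unitization ℂ B) ≤ v := hv_eq ▸ star_mul_self_nonneg _
  have husa : IsSelfAdjoint u := IsSelfAdjoint.of_nonneg hu0
  have hvsa : IsSelfAdjoint v := IsSelfAdjoint.of_nonneg hv0
  have hunorm : ‖u‖ ≤ 1 := by
    rw [hudef, Unitization.norm_inr, hiso φ]
    exact hφnorm
  have hvnorm : ‖v‖ ≤ 1 := by
    rw [hvdef, Unitization.norm_inr, hiso ψ]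
    exact hψnorm
  have h_le : u - v ≤ algebraMap ℝ (Unitization ℂ B) 1 := by
    calc u - v ≤ u := sub_le_self u hv0
      _ ≤ algebraMap ℝ (Unitization ℂ B) ‖u‖ := husa.le_algebraMap_norm_self
      _ ≤ algebraMap ℝ (Unitization ℂ B) 1 := aux_alg_mono hunorm
  have h_ge : -(algebraMap ℝ (Unitization ℂ B) 1) ≤ u - v := by
    have h1 : v - u ≤ algebraMap ℝ (Unitization ℂ B) 1 := by
      calc v - u ≤ v := sub_le_self v hu0
        _ ≤ algebraMap ℝ (Unitization ℂ B) ‖v‖ := hvsa.le_algebraMap_norm_self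
        _ ≤ algebraMap ℝ (Unitization ℂ B) 1 := aux_alg_mono hvnorm
    have h2 := neg_le_neg h1
    rwa [neg_sub] at h2
  have hwnorm : ‖u - v‖ ≤ 1 := aux_sandwich (husa.sub hvsa) zero_le_one h_le h_ge
  have hw_eq : u - v = ((T (φ - ψ) : B) : Unitization ℂ B) := by
    rw [map_sub, Unitization.inr_sub]
  have : ‖u - v‖ = ‖φ - ψ‖ := by
    rw [hw_eq, Unitization.norm_inr, hiso]
  linarith [hφψ, hwnorm, this ▸ hwnorm]
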